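/- Let T be a symmetric bilinear form and J, J̃ vectors on Minkowski space ℝ⁴ satisfying the local mass-charge inequality. Let X be a nonzero future-directed causal vector, let V₁, V₂ be real numbers with η(X,X) = V₁² + V₂², and let N be a future-directed timelike vector. Suppose η(N, T♯X) − V₁ * η(N,J) + V₂ * η(N,J̃) = 0. Then there exists χ ≥ 0 such that T(u,v) = χ * η(X,u) * η(X,v) for all u, v, J = (χ * V₁) • X, and J̃ = (−χ * V₂) • X. -/

import Mathlib

noncomputable def eta (x y : Fin 4 → ℝ) : ℝ :=
  x 0 * y 0 - x 1 * y 1 - x 2 * y 2 - x 3 * y 3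

set_option maxHeartbeats 1600000

lemma cs3 (a1 a2 a3 b1 b2 b3 : ℝ) :
    (a1*b1 + a2*b2 + a3*b3)^2 ≤ (a1^2+a2^2+a3^2) * (b1^2+b2^2+b3^2) := by
  nlinarith [sq_nonneg (a1*b2 - a2*b1), sq_nonneg (a1*b3 - a3*b1), sq_nonneg (a2*b3 - a3*b2)]

lemma le_of_sq_le (d A : ℝ) (h0 : 0 ≤ A) (h2 : d^2 ≤ A^2) : d ≤ A := by nlinarith

lemma eta_pos (a b : Fin 4 → ℝ) (ha : 0 ≤ eta a a) (ha0 : 0 ≤ a 0)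
    (hb : 0 ≤ eta b b) (hb0 : 0 ≤ b 0) : 0 ≤ eta a b := by
  simp only [eta] at ha hb ⊢
  have cs := cs3 (a 1) (a 2) (a 3) (b 1) (b 2) (b 3)
  have hSa : (a 1)^2 + (a 2)^2 + (a 3)^2 ≤ (a 0)^2 := by nlinarith
  have hSb : (b 1)^2 + (b 2)^2 + (b 3)^2 ≤ (b 0)^2 := by nlinarith
  have h1 : ((a 1)^2+(a 2)^2+(a 3)^2) * ((b 1)^2+(b 2)^2+(b 3)^2) ≤ (a 0)^2*(b 0)^2 :=
    mul_le_mul hSa hSb (by positivity) (by positivity)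
  have hd2 : (a 1*b 1 + a 2*b 2 + a 3*b 3)^2 ≤ (a 0 * b 0)^2 := by nlinarith [cs, h1]
  linarith [le_of_sq_le _ _ (mul_nonneg ha0 hb0) hd2]

lemma eta_revCS (a b : Fin 4 → ℝ) (ha : 0 ≤ eta a a) (ha0 : 0 ≤ a 0)
    (hb : 0 ≤ eta b b) (hb0 : 0 ≤ b 0) : eta a a * eta b b ≤ (eta a b)^2 := by
  simp only [eta] at ha hb ⊢
  have cs := cs3 (a 1) (a 2) (a 3) (b 1) (b 2) (b 3)
  set p := Real.sqrt ((a 1)^2 + (a 2)^2 + (a 3)^2) with hpdef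
  set q := Real.sqrt ((b 1)^2 + (b 2)^2 + (b 3)^2) with hqdef
  have hp0 : 0 ≤ p := Real.sqrt_nonneg _
  have hq0 : 0 ≤ q := Real.sqrt_nonneg _
  have hp2 : p^2 = (a 1)^2 + (a 2)^2 + (a 3)^2 := Real.sq_sqrt (by positivity)
  have hq2 : q^2 = (b 1)^2 + (b 2)^2 + (b 3)^2 := Real.sq_sqrt (by positivity)
  have hpa : p ≤ a 0 := by
    rw [hpdef, ← Real.sqrt_sq ha0]
    exact Real.sqrt_le_sqrt (by nlinarith)
  have hqb : q ≤ b 0 := by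
    rw [hqdef, ← Real.sqrt_sq hb0]
    exact Real.sqrt_le_sqrt (by nlinarith)
  have hpq : (p*q)^2 = ((a 1)^2 + (a 2)^2 + (a 3)^2) * ((b 1)^2 + (b 2)^2 + (b 3)^2) := by
    rw [mul_pow, hp2, hq2]
  have hd : a 1 * b 1 + a 2 * b 2 + a 3 * b 3 ≤ p*q :=
    le_of_sq_le _ _ (mul_nonneg hp0 hq0) (by linarith [cs, hpq])
  have hab : p*q ≤ a 0 * b 0 := mul_le_mul hpa hqb (by positivity) ha0
  nlinarith [sq_nonneg (a 0 * q - b 0 * p),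
    mul_nonneg (sub_nonneg.2 hd)
      (show (0:ℝ) ≤ 2*(a 0 * b 0) - p*q - (a 1*b 1 + a 2*b 2 + a 3*b 3) by linarith)]

lemma eta_strict (a b : Fin 4 → ℝ) (ha : 0 ≤ eta a a) (ha0 : 0 < a 0)
    (hb : 0 < eta b b) (hb0 : 0 < b 0) : 0 < eta a b := by
  simp only [eta] at ha hb ⊢
  have cs := cs3 (a 1) (a 2) (a 3) (b 1) (b 2) (b 3)
  set p := Real.sqrt ((a 1)^2 + (a 2)^2 + (a 3)^2) with hpdef
  set r := Real.sqrt ((b 1)^2 + (b 2)^2 + (b 3)^2) with hrdef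
  have hp0 : 0 ≤ p := Real.sqrt_nonneg _
  have hr0 : 0 ≤ r := Real.sqrt_nonneg _
  have hp2 : p^2 = (a 1)^2 + (a 2)^2 + (a 3)^2 := Real.sq_sqrt (by positivity)
  have hr2 : r^2 = (b 1)^2 + (b 2)^2 + (b 3)^2 := Real.sq_sqrt (by positivity)
  have hpa : p ≤ a 0 := by
    rw [hpdef, ← Real.sqrt_sq ha0.le]
    exact Real.sqrt_le_sqrt (by nlinarith)
  have hrb : r < b 0 := by
    rw [hrdef, ← Real.sqrt_sq hb0.le]
    exact Real.sqrt_lt_sqrt (by positivity) (by nlinarith)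
  have hpr : (p*r)^2 = ((a 1)^2 + (a 2)^2 + (a 3)^2) * ((b 1)^2 + (b 2)^2 + (b 3)^2) := by
    rw [mul_pow, hp2, hr2]
  have hd : a 1 * b 1 + a 2 * b 2 + a 3 * b 3 ≤ p*r :=
    le_of_sq_le _ _ (mul_nonneg hp0 hr0) (by linarith [cs, hpr])
  have h1 : p*r ≤ a 0 * r := mul_le_mul_of_nonneg_right hpa hr0
  have h2 : a 0 * r < a 0 * b 0 := mul_lt_mul_of_pos_left hrb ha0
  linarith

lemma eta_fut0 (a Z : Fin 4 → ℝ) (ha : 0 ≤ eta a a) (hZt : 0 < eta Z Z)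
    (hZ0 : 0 < Z 0) (haZ : 0 ≤ eta a Z) : 0 ≤ a 0 := by
  by_contra h
  push_neg at h
  have h1 : 0 < eta (-a) Z := by
    refine eta_strict _ Z ?_ ?_ hZt hZ0
    · simp only [eta, Pi.neg_apply] at ha ⊢; linarith
    · simp only [Pi.neg_apply]; linarith
  simp only [eta, Pi.neg_apply] at h1 haZ
  linarith

lemma eta_perp (r X : Fin 4 → ℝ) (hm : 0 < eta X X) (hperp : eta r X = 0)
    (hr : 0 ≤ eta r r) : r 0 = 0 ∧ r 1 = 0 ∧ r 2 = 0 ∧ r 3 = 0 := by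
  simp only [eta] at hm hperp hr
  have cs := cs3 (r 1) (r 2) (r 3) (X 1) (X 2) (X 3)
  have hSX : (0:ℝ) ≤ (X 1)^2 + (X 2)^2 + (X 3)^2 := by positivity
  have hSr : (r 1)^2 + (r 2)^2 + (r 3)^2 ≤ (r 0)^2 := by nlinarith
  have h1 : ((r 1)^2+(r 2)^2+(r 3)^2) * ((X 1)^2+(X 2)^2+(X 3)^2)
      ≤ (r 0)^2 * ((X 1)^2+(X 2)^2+(X 3)^2) := mul_le_mul_of_nonneg_right hSr hSX
  have hdd2 : (r 1*X 1 + r 2*X 2 + r 3*X 3)^2 = (r 0)^2*(X 0)^2 := by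
    have hdd : r 1*X 1 + r 2*X 2 + r 3*X 3 = r 0 * X 0 := by linarith
    rw [hdd]; ring
  have hr00 : (r 0)^2 = 0 := by
    have hkey : (r 0)^2 * (X 0 * X 0 - X 1 * X 1 - X 2 * X 2 - X 3 * X 3) ≤ 0 := by
      nlinarith [cs, h1, hdd2]
    nlinarith [sq_nonneg (r 0)]
  have hr0 : r 0 = 0 := sq_eq_zero_iff.mp hr00
  have hs : r 1*r 1 + r 2*r 2 + r 3*r 3 ≤ 0 := by nlinarith [hr0]
  refine ⟨hr0, ?_, ?_, ?_⟩ <;>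
    [exact mul_self_eq_zero.mp (le_antisymm (by nlinarith) (mul_self_nonneg _));
     exact mul_self_eq_zero.mp (le_antisymm (by nlinarith) (mul_self_nonneg _));
     exact mul_self_eq_zero.mp (le_antisymm (by nlinarith) (mul_self_nonneg _))]

lemma eta_nullprop (a X : Fin 4 → ℝ) (hX : eta X X = 0) (hX0 : 0 < X 0)
    (ha : 0 ≤ eta a a) (ha0 : 0 ≤ a 0) (hperp : eta a X = 0) :
    a 1 * X 0 = a 0 * X 1 ∧ a 2 * X 0 = a 0 * X 2 ∧ a 3 * X 0 = a 0 * X 3 := by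
  simp only [eta] at hX hperp ha
  have cs := cs3 (a 1) (a 2) (a 3) (X 1) (X 2) (X 3)
  have hSa : (a 1)^2 + (a 2)^2 + (a 3)^2 ≤ (a 0)^2 := by nlinarith
  have hSX : (X 1)^2 + (X 2)^2 + (X 3)^2 = (X 0)^2 := by linear_combination -hX
  have hdd : a 1*X 1 + a 2*X 2 + a 3*X 3 = a 0 * X 0 := by linarith
  have hdd2 : (a 1*X 1 + a 2*X 2 + a 3*X 3)^2 = (a 0)^2*(X 0)^2 := by rw [hdd]; ring
  have hchain : ((a 1)^2+(a 2)^2+(a 3)^2) * ((X 1)^2+(X 2)^2+(X 3)^2)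
      ≤ (a 1*X 1 + a 2*X 2 + a 3*X 3)^2 := by
    have h1 := mul_le_mul_of_nonneg_right hSa (by positivity :
      (0:ℝ) ≤ (X 1)^2 + (X 2)^2 + (X 3)^2)
    rw [hSX] at h1 ⊢
    linarith [hdd2, h1]
  have hid : (a 1*X 2 - a 2*X 1)^2 + (a 1*X 3 - a 3*X 1)^2 + (a 2*X 3 - a 3*X 2)^2
      = ((a 1)^2+(a 2)^2+(a 3)^2) * ((X 1)^2+(X 2)^2+(X 3)^2)
        - (a 1*X 1 + a 2*X 2 + a 3*X 3)^2 := by ring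
  have hz : (a 1*X 2 - a 2*X 1)^2 + (a 1*X 3 - a 3*X 1)^2 + (a 2*X 3 - a 3*X 2)^2 = 0 :=
    le_antisymm (by linarith) (by positivity)
  have hc12 : a 1*X 2 - a 2*X 1 = 0 := by
    have h : (a 1*X 2 - a 2*X 1)^2 = 0 :=
      le_antisymm (by nlinarith [sq_nonneg (a 1*X 3 - a 3*X 1), sq_nonneg (a 2*X 3 - a 3*X 2)]) (sq_nonneg _)
    exact sq_eq_zero_iff.mp h
  have hc13 : a 1*X 3 - a 3*X 1 = 0 := by
    have h : (a 1*X 3 - a 3*X 1)^2 = 0 :=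
      le_antisymm (by nlinarith [sq_nonneg (a 1*X 2 - a 2*X 1), sq_nonneg (a 2*X 3 - a 3*X 2)]) (sq_nonneg _)
    exact sq_eq_zero_iff.mp h
  have hc23 : a 2*X 3 - a 3*X 2 = 0 := by
    have h : (a 2*X 3 - a 3*X 2)^2 = 0 :=
      le_antisymm (by nlinarith [sq_nonneg (a 1*X 2 - a 2*X 1), sq_nonneg (a 1*X 3 - a 3*X 1)]) (sq_nonneg _)
    exact sq_eq_zero_iff.mp h
  refine ⟨?_, ?_, ?_⟩
  · have h : X 0 * (a 1 * X 0 - a 0 * X 1) = 0 := by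
      linear_combination X 2 * hc12 + X 3 * hc13 + a 1 * hX - X 1 * hperp
    rcases mul_eq_zero.mp h with h' | h'
    · exact absurd h' hX0.ne'
    · linarith
  · have h : X 0 * (a 2 * X 0 - a 0 * X 2) = 0 := by
      linear_combination (-(X 1)) * hc12 + X 3 * hc23 + a 2 * hX - X 2 * hperp
    rcases mul_eq_zero.mp h with h' | h'
    · exact absurd h' hX0.ne'
    · linarith
  · have h : X 0 * (a 3 * X 0 - a 0 * X 3) = 0 := by
      linear_combination (-(X 1)) * hc13 + (-(X 2)) * hc23 + a 3 * hX - X 3 * hperp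
    rcases mul_eq_zero.mp h with h' | h'
    · exact absurd h' hX0.ne'
    · linarith

lemma eta_tlprop (a X : Fin 4 → ℝ) (ha : 0 ≤ eta a a) (hm : 0 < eta X X)
    (heq : (eta a X)^2 = eta a a * eta X X) :
    ∀ i, eta X X * a i = eta a X * X i := by
  set r : Fin 4 → ℝ := fun i => eta X X * a i - eta a X * X i with hrdef
  have h1 : eta r X = 0 := by
    simp only [hrdef, eta]; ring
  have h2 : eta r r = 0 := by
    simp only [hrdef, eta] at heq ⊢
    linear_combination (-(X 0 * X 0 - X 1 * X 1 - X 2 * X 2 - X 3 * X 3)) * heq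
  obtain ⟨g0, g1, g2, g3⟩ := eta_perp r X hm h1 (le_of_eq h2.symm)
  intro i
  fin_cases i
  · simpa [hrdef, sub_eq_zero] using g0
  · simpa [hrdef, sub_eq_zero] using g1
  · simpa [hrdef, sub_eq_zero] using g2
  · simpa [hrdef, sub_eq_zero] using g3

lemma timelike_nbhd (N : Fin 4 → ℝ) (hNt : 0 < eta N N) (hN0 : 0 < N 0) (d : Fin 4 → ℝ) :
    ∃ ε > 0, ∀ t : ℝ, |t| ≤ ε →
      0 < eta (N + t • d) (N + t • d) ∧ 0 < (N + t • d) 0 := by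
  have hden1 : (0:ℝ) < 2*(1+|d 0|) := by positivity
  have hden2 : (0:ℝ) < 1 + 2*|eta N d| + |eta d d| + eta N N := by positivity
  set ε := min 1 (min (N 0 / (2*(1+|d 0|))) (eta N N / (1 + 2*|eta N d| + |eta d d| + eta N N))) with hεdef
  have hεpos : 0 < ε :=
    lt_min one_pos (lt_min (div_pos hN0 hden1) (div_pos hNt hden2))
  refine ⟨ε, hεpos, ?_⟩
  intro t ht
  obtain ⟨htl, htu⟩ := abs_le.mp ht
  have hε1 : ε ≤ 1 := min_le_left _ _
  have hε2 : ε * (2*(1+|d 0|)) ≤ N 0 := by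
    calc ε * (2*(1+|d 0|)) ≤ (N 0 / (2*(1+|d 0|))) * (2*(1+|d 0|)) := by
          apply mul_le_mul_of_nonneg_right _ hden1.le
          exact le_trans (min_le_right _ _) (min_le_left _ _)
      _ = N 0 := div_mul_cancel₀ _ hden1.ne'
  have hε3 : ε * (1 + 2*|eta N d| + |eta d d| + eta N N) ≤ eta N N := by
    calc ε * (1 + 2*|eta N d| + |eta d d| + eta N N)
        ≤ (eta N N / (1 + 2*|eta N d| + |eta d d| + eta N N)) * (1 + 2*|eta N d| + |eta d d| + eta N N) := by
          apply mul_le_mul_of_nonneg_right _ hden2.le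
          exact le_trans (min_le_right _ _) (min_le_right _ _)
      _ = eta N N := div_mul_cancel₀ _ hden2.ne'
  have ht2 : t^2 ≤ ε := by
    have h1 : |t| * |t| ≤ ε * ε := mul_le_mul ht ht (abs_nonneg t) hεpos.le
    have h2 : ε * ε ≤ ε * 1 := mul_le_mul_of_nonneg_left hε1 hεpos.le
    nlinarith [abs_mul_abs_self t]
  have f1 : -(ε * |eta N d|) ≤ t * eta N d := by
    rcases le_or_gt 0 (eta N d) with h | h
    · have := mul_le_mul_of_nonneg_right htl h
      rw [abs_of_nonneg h]; nlinarith
    · have := mul_le_mul_of_nonpos_right htu h.le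
      rw [abs_of_neg h]; nlinarith
  have f2 : -(ε * |eta d d|) ≤ t^2 * eta d d := by
    rcases le_or_gt 0 (eta d d) with h | h
    · have h0 : 0 ≤ t^2 * eta d d := mul_nonneg (sq_nonneg t) h
      have h1 : 0 ≤ ε * |eta d d| := mul_nonneg hεpos.le (abs_nonneg _)
      linarith
    · have := mul_le_mul_of_nonpos_right ht2 h.le
      rw [abs_of_neg h]; nlinarith
  have hεN : 0 ≤ ε * eta N N := mul_nonneg hεpos.le hNt.le
  have hε3' : ε + 2*(ε*|eta N d|) + ε*|eta d d| + ε*eta N N ≤ eta N N := by nlinarith [hε3]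
  have hexp : eta (N + t • d) (N + t • d) = eta N N + 2*(t * eta N d) + t^2 * eta d d := by
    simp only [eta, Pi.add_apply, Pi.smul_apply, smul_eq_mul]; ring
  constructor
  · rw [hexp]; linarith
  · have h0 : (N + t • d) 0 = N 0 + t * d 0 := by
      simp only [Pi.add_apply, Pi.smul_apply, smul_eq_mul]
    rw [h0]
    have f3 : -(ε * |d 0|) ≤ t * d 0 := by
      rcases le_or_gt 0 (d 0) with h | h
      · have := mul_le_mul_of_nonneg_right htl h
        rw [abs_of_nonneg h]; nlinarith
      · have := mul_le_mul_of_nonpos_right htu h.le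
        rw [abs_of_neg h]; nlinarith
    nlinarith [hε2, hεpos, abs_nonneg (d 0)]

lemma interior_zero (N : Fin 4 → ℝ) (hNt : 0 < eta N N) (hN0 : 0 < N 0)
    (c0 c1 c2 c3 : ℝ)
    (hpos : ∀ Z : Fin 4 → ℝ, 0 < eta Z Z → 0 < Z 0 →
      0 ≤ c0 * Z 0 + c1 * Z 1 + c2 * Z 2 + c3 * Z 3)
    (hzero : c0 * N 0 + c1 * N 1 + c2 * N 2 + c3 * N 3 = 0) :
    c0 = 0 ∧ c1 = 0 ∧ c2 = 0 ∧ c3 = 0 := by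
  have main : ∀ d : Fin 4 → ℝ, c0 * d 0 + c1 * d 1 + c2 * d 2 + c3 * d 3 = 0 := by
    intro d
    obtain ⟨ε, hε, h⟩ := timelike_nbhd N hNt hN0 d
    have h1 := h ε (by rw [abs_of_nonneg hε.le])
    have h2 := h (-ε) (by rw [abs_neg, abs_of_nonneg hε.le])
    have p1 := hpos _ h1.1 h1.2
    have p2 := hpos _ h2.1 h2.2
    simp only [Pi.add_apply, Pi.smul_apply, smul_eq_mul] at p1 p2
    have hs1 : 0 ≤ ε * (c0 * d 0 + c1 * d 1 + c2 * d 2 + c3 * d 3) := by nlinarith [p1, hzero]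
    have hs2 : ε * (c0 * d 0 + c1 * d 1 + c2 * d 2 + c3 * d 3) ≤ 0 := by nlinarith [p2, hzero]
    have := le_antisymm hs2 hs1
    rcases mul_eq_zero.mp this with h' | h'
    · exact absurd h' hε.ne'
    · exact h'
  have m0 := main ![1,0,0,0]
  have m1 := main ![0,1,0,0]
  have m2 := main ![0,0,1,0]
  have m3 := main ![0,0,0,1]
  simp only [Matrix.cons_val_zero, Matrix.cons_val_one, Matrix.head_cons,
    Matrix.cons_val_two, Matrix.tail_cons, Matrix.cons_val_three] at m0 m1 m2 m3
  refine ⟨by linarith, by linarith, by linarith, by linarith⟩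

/-- Lemma 2.8 of the paper (charged dust form): if the local mass-charge
inequality holds, X is a nonzero future-directed causal vector with
η(X,X) = V₁² + V₂², N is future-directed timelike, and
η(N,T♯X) - V₁ η(N,J) + V₂ η(N,J̃) = 0, then T, J, J̃ describe charged dust. -/
theorem chargedDust_of_localMassCharge
    (T : LinearMap.BilinForm ℝ (Fin 4 → ℝ)) (hT : ∀ x y, T x y = T y x)
    (J Jt : Fin 4 → ℝ)
    (Tsharp : (Fin 4 → ℝ) → (Fin 4 → ℝ))
    (hTs : ∀ x u, eta (Tsharp x) u = T x u)
    (hLMC : ∀ Z : Fin 4 → ℝ, eta Z Z ≥ 0 → Z 0 ≥ 0 →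
        T Z Z ≥ 0 ∧ eta (Tsharp Z) (Tsharp Z) ≥ (eta J Z) ^ 2 + (eta Jt Z) ^ 2)
    (X : Fin 4 → ℝ) (hXne : X ≠ 0) (hXcausal : eta X X ≥ 0) (hXfut : X 0 ≥ 0)
    (V₁ V₂ : ℝ) (hV : eta X X = V₁ ^ 2 + V₂ ^ 2)
    (N : Fin 4 → ℝ) (hNt : eta N N > 0) (hNfut : N 0 > 0)
    (hconstraint : eta N (Tsharp X) - V₁ * eta N J + V₂ * eta N Jt = 0) :
    ∃ χ : ℝ, 0 ≤ χ ∧ (∀ u v : Fin 4 → ℝ, T u v = χ * eta X u * eta X v)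
      ∧ J = (χ * V₁) • X ∧ Jt = (-χ * V₂) • X := by
  have etaSymm : ∀ x y : Fin 4 → ℝ, eta x y = eta y x := by
    intro x y; simp only [eta]; ring
  -- X 0 is strictly positive
  have hX0 : 0 < X 0 := by
    rcases lt_or_eq_of_le hXfut with h | h
    · exact h
    · exfalso
      apply hXne
      have h0 : X 0 = 0 := h.symm
      simp only [eta] at hXcausal
      rw [h0] at hXcausal
      have h1 : X 1 = 0 := by nlinarith [hXcausal]
      have h2 : X 2 = 0 := by nlinarith [hXcausal]
      have h3 : X 3 = 0 := by nlinarith [hXcausal]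
      funext i
      fin_cases i
      · exact h0
      · exact h1
      · exact h2
      · exact h3
  -- decomposition of T in the second argument
  have hdecomp : ∀ (w v : Fin 4 → ℝ), T w v =
      v 0 * T w ![1,0,0,0] + v 1 * T w ![0,1,0,0]
        + v 2 * T w ![0,0,1,0] + v 3 * T w ![0,0,0,1] := by
    intro w v
    have hv : v = v 0 • (![1,0,0,0] : Fin 4 → ℝ) + v 1 • ![0,1,0,0]
        + v 2 • ![0,0,1,0] + v 3 • ![0,0,0,1] := by
      funext i
      fin_cases i <;> simp
    calc T w v = T w (v 0 • (![1,0,0,0] : Fin 4 → ℝ) + v 1 • ![0,1,0,0]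
        + v 2 • ![0,0,1,0] + v 3 • ![0,0,0,1]) := congrArg (T w) hv
    _ = _ := by simp only [map_add, map_smul, LinearMap.add_apply, LinearMap.smul_apply, smul_eq_mul]
  -- main chain of inequalities
  have chain : ∀ Z : Fin 4 → ℝ, 0 < eta Z Z → 0 < Z 0 →
      0 ≤ T Z X ∧ eta (Tsharp Z) (Tsharp Z) * eta X X ≤ (T Z X)^2 ∧
      0 ≤ (Tsharp Z) 0 ∧ 0 ≤ eta (Tsharp Z) (Tsharp Z) ∧
      (eta J Z)^2 + (eta Jt Z)^2 ≤ eta (Tsharp Z) (Tsharp Z) ∧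
      V₁ * eta J Z - V₂ * eta Jt Z ≤ T Z X := by
    intro Z hZt hZ0
    obtain ⟨hTZZ, hLZ⟩ := hLMC Z hZt.le hZ0.le
    have haa : 0 ≤ eta (Tsharp Z) (Tsharp Z) := le_trans (by positivity) hLZ
    have haZ : 0 ≤ eta (Tsharp Z) Z := by rw [hTs]; exact hTZZ
    have ha0 : 0 ≤ (Tsharp Z) 0 := eta_fut0 _ Z haa hZt hZ0 haZ
    have haX : eta (Tsharp Z) X = T Z X := hTs Z X
    have hA0 : 0 ≤ T Z X := by rw [← haX]; exact eta_pos _ X haa ha0 hXcausal hXfut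
    have hrev : eta (Tsharp Z) (Tsharp Z) * eta X X ≤ (T Z X)^2 := by
      rw [← haX]; exact eta_revCS _ X haa ha0 hXcausal hXfut
    have hCS2 : (V₁ * eta J Z - V₂ * eta Jt Z)^2
        ≤ (V₁^2+V₂^2) * ((eta J Z)^2 + (eta Jt Z)^2) := by
      nlinarith [sq_nonneg (V₂ * eta J Z + V₁ * eta Jt Z)]
    have hB : V₁ * eta J Z - V₂ * eta Jt Z ≤ T Z X := by
      have h2 : (V₁^2+V₂^2) * ((eta J Z)^2 + (eta Jt Z)^2)
          ≤ eta X X * eta (Tsharp Z) (Tsharp Z) := by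
        rw [hV]
        exact mul_le_mul_of_nonneg_left hLZ (by positivity)
      have h1 : (V₁ * eta J Z - V₂ * eta Jt Z)^2 ≤ (T Z X)^2 := by nlinarith [hrev, hCS2, h2]
      exact le_of_sq_le _ _ hA0 h1
    exact ⟨hA0, hrev, ha0, haa, hLZ, hB⟩
  -- the functional Z ↦ T X Z - V₁ η(J,Z) + V₂ η(J̃,Z) vanishes
  have hpos : ∀ Z : Fin 4 → ℝ, 0 < eta Z Z → 0 < Z 0 →
      0 ≤ (T X ![1,0,0,0] - V₁ * J 0 + V₂ * Jt 0) * Z 0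
        + (T X ![0,1,0,0] + V₁ * J 1 - V₂ * Jt 1) * Z 1
        + (T X ![0,0,1,0] + V₁ * J 2 - V₂ * Jt 2) * Z 2
        + (T X ![0,0,0,1] + V₁ * J 3 - V₂ * Jt 3) * Z 3 := by
    intro Z hZt hZ0
    have hB := (chain Z hZt hZ0).2.2.2.2.2
    have hd := hdecomp X Z
    have hsym := hT Z X
    simp only [eta] at hB
    linarith [hB, hd, hsym]
  have hzero : (T X ![1,0,0,0] - V₁ * J 0 + V₂ * Jt 0) * N 0
        + (T X ![0,1,0,0] + V₁ * J 1 - V₂ * Jt 1) * N 1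
        + (T X ![0,0,1,0] + V₁ * J 2 - V₂ * Jt 2) * N 2
        + (T X ![0,0,0,1] + V₁ * J 3 - V₂ * Jt 3) * N 3 = 0 := by
    have h1 : eta N (Tsharp X) = T X N := by rw [etaSymm]; exact hTs X N
    rw [h1] at hconstraint
    have hd := hdecomp X N
    simp only [eta] at hconstraint
    linarith [hconstraint, hd]
  obtain ⟨hz0, hz1, hz2, hz3⟩ := interior_zero N hNt hNfut _ _ _ _ hpos hzero
  have star : ∀ u : Fin 4 → ℝ, T X u = V₁ * eta J u - V₂ * eta Jt u := by
    intro u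
    have hd := hdecomp X u
    simp only [eta]
    linear_combination hd + u 0 * hz0 + u 1 * hz1 + u 2 * hz2 + u 3 * hz3
  -- pointwise structure at every future timelike Z
  have P : ∀ Z : Fin 4 → ℝ, 0 < eta Z Z → 0 < Z 0 →
      ∃ l : ℝ, 0 ≤ l ∧ (∀ u, T Z u = l * eta X u) ∧
        eta J Z = V₁ * l ∧ eta Jt Z = -(V₂ * l) := by
    intro Z hZt hZ0
    obtain ⟨hA0, hrev, ha0, haa, hLZ, hB⟩ := chain Z hZt hZ0
    have hAB : T Z X = V₁ * eta J Z - V₂ * eta Jt Z := by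
      rw [hT Z X]; exact star Z
    rcases eq_or_lt_of_le hXcausal with hm | hm
    · -- X is null
      have h12 : V₁^2 + V₂^2 = 0 := by rw [← hV, ← hm]
      have hV1 : V₁ = 0 := by
        have : V₁^2 = 0 := le_antisymm (by nlinarith [sq_nonneg V₂]) (sq_nonneg _)
        exact sq_eq_zero_iff.mp this
      have hV2 : V₂ = 0 := by
        have : V₂^2 = 0 := le_antisymm (by nlinarith [sq_nonneg V₁]) (sq_nonneg _)
        exact sq_eq_zero_iff.mp this
      have hA : T Z X = 0 := by rw [hAB, hV1, hV2]; ring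
      have haX : eta (Tsharp Z) X = 0 := by rw [hTs]; exact hA
      obtain ⟨g1, g2, g3⟩ := eta_nullprop (Tsharp Z) X hm.symm hX0 haa ha0 haX
      have key : ∀ u : Fin 4 → ℝ, X 0 * T Z u = (Tsharp Z) 0 * eta X u := by
        intro u
        rw [← hTs Z u]
        simp only [eta]
        linear_combination (-(u 1)) * g1 + (-(u 2)) * g2 + (-(u 3)) * g3
      have hsz : eta (Tsharp Z) (Tsharp Z) = 0 := by
        have hk := key (Tsharp Z)
        rw [← hTs Z (Tsharp Z)] at hk
        rw [etaSymm X (Tsharp Z), haX] at hk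
        have h'' : X 0 * eta (Tsharp Z) (Tsharp Z) = 0 := by rw [hk]; ring
        rcases mul_eq_zero.mp h'' with h' | h'
        · exact absurd h' hX0.ne'
        · exact h'
      have hj : eta J Z = 0 := by
        have : (eta J Z)^2 = 0 :=
          le_antisymm (by nlinarith [hLZ, hsz, sq_nonneg (eta Jt Z)]) (sq_nonneg _)
        exact sq_eq_zero_iff.mp this
      have hk' : eta Jt Z = 0 := by
        have : (eta Jt Z)^2 = 0 :=
          le_antisymm (by nlinarith [hLZ, hsz, sq_nonneg (eta J Z)]) (sq_nonneg _)
        exact sq_eq_zero_iff.mp this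
      refine ⟨(Tsharp Z) 0 / X 0, div_nonneg ha0 hX0.le, ?_, ?_, ?_⟩
      · intro u
        rw [div_mul_eq_mul_div, eq_div_iff hX0.ne']
        linarith [key u]
      · rw [hj, hV1]; ring
      · rw [hk', hV2]; ring
    · -- X is timelike
      have hmne : eta X X ≠ 0 := hm.ne'
      have h2 : ((eta J Z)^2 + (eta Jt Z)^2) * eta X X
          ≤ eta (Tsharp Z) (Tsharp Z) * eta X X := mul_le_mul_of_nonneg_right hLZ hm.le
      have hCS2 : (V₁ * eta J Z - V₂ * eta Jt Z)^2
          ≤ ((eta J Z)^2 + (eta Jt Z)^2) * eta X X := by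
        rw [hV]
        nlinarith [sq_nonneg (V₂ * eta J Z + V₁ * eta Jt Z)]
      have hA2 : (T Z X)^2 = (V₁ * eta J Z - V₂ * eta Jt Z)^2 := by rw [hAB]
      have heq1 : eta (Tsharp Z) (Tsharp Z) * eta X X = (T Z X)^2 :=
        le_antisymm hrev (by linarith)
      have heq3 : ((eta J Z)^2 + (eta Jt Z)^2) * eta X X
          = (V₁ * eta J Z - V₂ * eta Jt Z)^2 :=
        le_antisymm (by linarith) hCS2
      have hcross : V₂ * eta J Z + V₁ * eta Jt Z = 0 := by
        have h : (V₂ * eta J Z + V₁ * eta Jt Z)^2 = 0 := by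
          linear_combination heq3 - ((eta J Z)^2 + (eta Jt Z)^2) * hV
        exact sq_eq_zero_iff.mp h
      have heqA : (eta (Tsharp Z) X)^2 = eta (Tsharp Z) (Tsharp Z) * eta X X := by
        rw [hTs Z X]; exact heq1.symm
      have htl := eta_tlprop (Tsharp Z) X haa hm heqA
      have g0 := htl 0; have g1 := htl 1; have g2 := htl 2; have g3 := htl 3
      rw [hTs Z X] at g0 g1 g2 g3
      have key : ∀ u : Fin 4 → ℝ, eta X X * T Z u = T Z X * eta X u := by
        intro u
        rw [← hTs Z u]
        simp only [eta] at g0 g1 g2 g3 ⊢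
        linear_combination u 0 * g0 - u 1 * g1 - u 2 * g2 - u 3 * g3
      refine ⟨T Z X / eta X X, div_nonneg hA0 hm.le, ?_, ?_, ?_⟩
      · intro u
        rw [div_mul_eq_mul_div, eq_div_iff hmne]
        linarith [key u]
      · have hmj : eta X X * eta J Z = V₁ * T Z X := by
          linear_combination eta J Z * hV - V₁ * hAB + V₂ * hcross
        field_simp
        linarith [hmj]
      · have hmk : eta X X * eta Jt Z = -(V₂ * T Z X) := by
          linear_combination eta Jt Z * hV + V₂ * hAB + V₁ * hcross
        field_simp
        linarith [hmk]
  -- assemble from four future timelike probes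
  have pe0 : (0:ℝ) < eta ![1,0,0,0] ![1,0,0,0] := by norm_num [eta, Matrix.cons_val_two, Matrix.cons_val_three]
  have pe1 : (0:ℝ) < eta ![2,1,0,0] ![2,1,0,0] := by norm_num [eta, Matrix.cons_val_two, Matrix.cons_val_three]
  have pe2 : (0:ℝ) < eta ![2,0,1,0] ![2,0,1,0] := by norm_num [eta, Matrix.cons_val_two, Matrix.cons_val_three]
  have pe3 : (0:ℝ) < eta ![2,0,0,1] ![2,0,0,1] := by norm_num [eta, Matrix.cons_val_two, Matrix.cons_val_three]
  obtain ⟨l0, hl00, hT0, hJ0, hK0⟩ := P ![1,0,0,0] pe0 (by norm_num)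
  obtain ⟨l1, hl10, hT1, hJ1, hK1⟩ := P ![2,1,0,0] pe1 (by norm_num)
  obtain ⟨l2, hl20, hT2, hJ2, hK2⟩ := P ![2,0,1,0] pe2 (by norm_num)
  obtain ⟨l3, hl30, hT3, hJ3, hK3⟩ := P ![2,0,0,1] pe3 (by norm_num)
  have hXZ0 : eta X ![1,0,0,0] = X 0 := by norm_num [eta, Matrix.cons_val_two, Matrix.cons_val_three]
  have hXZ1 : eta X ![2,1,0,0] = 2*X 0 - X 1 := by norm_num [eta, Matrix.cons_val_two, Matrix.cons_val_three]; ring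
  have hXZ2 : eta X ![2,0,1,0] = 2*X 0 - X 2 := by norm_num [eta, Matrix.cons_val_two, Matrix.cons_val_three]; ring
  have hXZ3 : eta X ![2,0,0,1] = 2*X 0 - X 3 := by norm_num [eta, Matrix.cons_val_two, Matrix.cons_val_three]; ring
  obtain ⟨χ, hχ⟩ : ∃ c : ℝ, c = l0 / X 0 := ⟨_, rfl⟩
  have hl0' : l0 = χ * X 0 := by rw [hχ]; field_simp
  have hs1 : l1 * X 0 = l0 * (2*X 0 - X 1) := by
    have e1 := hT0 ![2,1,0,0]
    have e2 := hT1 ![1,0,0,0]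
    have e3 := hT ![1,0,0,0] ![2,1,0,0]
    rw [hXZ1] at e1; rw [hXZ0] at e2
    linarith [e1, e2, e3]
  have hs2 : l2 * X 0 = l0 * (2*X 0 - X 2) := by
    have e1 := hT0 ![2,0,1,0]
    have e2 := hT2 ![1,0,0,0]
    have e3 := hT ![1,0,0,0] ![2,0,1,0]
    rw [hXZ2] at e1; rw [hXZ0] at e2
    linarith [e1, e2, e3]
  have hs3 : l3 * X 0 = l0 * (2*X 0 - X 3) := by
    have e1 := hT0 ![2,0,0,1]
    have e2 := hT3 ![1,0,0,0]
    have e3 := hT ![1,0,0,0] ![2,0,0,1]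
    rw [hXZ3] at e1; rw [hXZ0] at e2
    linarith [e1, e2, e3]
  have hl1' : l1 = χ * (2*X 0 - X 1) := by
    rw [hχ, div_mul_eq_mul_div, eq_div_iff hX0.ne']
    linarith [hs1]
  have hl2' : l2 = χ * (2*X 0 - X 2) := by
    rw [hχ, div_mul_eq_mul_div, eq_div_iff hX0.ne']
    linarith [hs2]
  have hl3' : l3 = χ * (2*X 0 - X 3) := by
    rw [hχ, div_mul_eq_mul_div, eq_div_iff hX0.ne']
    linarith [hs3]
  refine ⟨χ, by rw [hχ]; exact div_nonneg hl00 hX0.le, ?_, ?_, ?_⟩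
  · intro u v
    have hu : u = (u 0 - 2*u 1 - 2*u 2 - 2*u 3) • (![1,0,0,0] : Fin 4 → ℝ)
        + u 1 • ![2,1,0,0] + u 2 • ![2,0,1,0] + u 3 • ![2,0,0,1] := by
      funext i
      fin_cases i <;> simp <;> ring
    have h := congrArg (fun w => T w v) hu
    beta_reduce at h
    rw [h]
    simp only [map_add, map_smul, LinearMap.add_apply, LinearMap.smul_apply, smul_eq_mul]
    rw [hT0 v, hT1 v, hT2 v, hT3 v, hl0', hl1', hl2', hl3']
    simp only [eta]
    ring
  · have hJ0' : J 0 = χ * V₁ * X 0 := by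
      norm_num [eta, Matrix.cons_val_two, Matrix.cons_val_three] at hJ0
      linear_combination hJ0 + V₁ * hl0'
    have hJ1' : J 1 = χ * V₁ * X 1 := by
      norm_num [eta, Matrix.cons_val_two, Matrix.cons_val_three] at hJ1
      linear_combination -hJ1 + 2 * hJ0' - V₁ * hl1'
    have hJ2' : J 2 = χ * V₁ * X 2 := by
      norm_num [eta, Matrix.cons_val_two, Matrix.cons_val_three] at hJ2
      linear_combination -hJ2 + 2 * hJ0' - V₁ * hl2'
    have hJ3' : J 3 = χ * V₁ * X 3 := by
      norm_num [eta, Matrix.cons_val_two, Matrix.cons_val_three] at hJ3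
      linear_combination -hJ3 + 2 * hJ0' - V₁ * hl3'
    funext i
    fin_cases i <;> simp only [Pi.smul_apply, smul_eq_mul] <;>
      [exact hJ0'; exact hJ1'; exact hJ2'; exact hJ3']
  · have hK0' : Jt 0 = -χ * V₂ * X 0 := by
      norm_num [eta, Matrix.cons_val_two, Matrix.cons_val_three] at hK0
      linear_combination hK0 - V₂ * hl0'
    have hK1' : Jt 1 = -χ * V₂ * X 1 := by
      norm_num [eta, Matrix.cons_val_two, Matrix.cons_val_three] at hK1
      linear_combination -hK1 + 2 * hK0' + V₂ * hl1'
    have hK2' : Jt 2 = -χ * V₂ * X 2 := by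
      norm_num [eta, Matrix.cons_val_two, Matrix.cons_val_three] at hK2
      linear_combination -hK2 + 2 * hK0' + V₂ * hl2'
    have hK3' : Jt 3 = -χ * V₂ * X 3 := by
      norm_num [eta, Matrix.cons_val_two, Matrix.cons_val_three] at hK3
      linear_combination -hK3 + 2 * hK0' + V₂ * hl3'
    funext i
    fin_cases i <;> simp only [Pi.smul_apply, smul_eq_mul] <;>
      [exact hK0'; exact hK1'; exact hK2'; exact hK3']
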